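/- arXiv:1509.04043 — 3 statements merged into one kernel-verified Lean document; each statement's English description precedes it below -/
import Mathlib

section
/- Let θ > 0 and c ≥ 0 be real numbers. Then ∫₀^∞ log(1 + c/(1 + y))·(1/θ)·e^{−y/θ} dy = log(1 + c) + e^{(1+c)/θ}·E₁((1+c)/θ) − e^{1/θ}·E₁(1/θ). -/
open MeasureTheory Real Set Filter Topology

/-- The exponential integral function `E₁(x) = ∫ₓ^∞ e^{−t}/t dt`. -/
noncomputable def expIntegralE1 (x : ℝ) : ℝ := ∫ t in Set.Ioi x, Real.exp (-t) / t

lemma my_integral_comp_add_right_Ioi (g : ℝ → ℝ) (a d : ℝ) :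
    ∫ x in Set.Ioi a, g (x + d) = ∫ x in Set.Ioi (a + d), g x := by
  rw [← integral_indicator measurableSet_Ioi, ← integral_indicator measurableSet_Ioi,
    ← integral_add_right_eq_self ((Set.Ioi (a + d)).indicator g) d]
  congr 1
  ext x
  by_cases h : a < x
  · simp [Set.indicator_apply, Set.mem_Ioi, h, add_lt_add_iff_right]
  · simp [Set.indicator_apply, Set.mem_Ioi, h, add_lt_add_iff_right]

lemma subA (θ a : ℝ) (hθ : 0 < θ) (ha : 0 < a) :
    ∫ y in Set.Ioi (0:ℝ), Real.exp (-(y/θ)) / (a + y)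
      = Real.exp (a/θ) * expIntegralE1 (a/θ) := by
  have h1 : ∫ y in Set.Ioi (0:ℝ), Real.exp (-(y/θ)) / (a + y)
      = ∫ y in Set.Ioi (0:ℝ), (fun t => Real.exp (a/θ) * (Real.exp (-(t/θ)) / t)) (y + a) := by
    refine setIntegral_congr_fun measurableSet_Ioi fun y hy => ?_
    have : Real.exp (a/θ) * Real.exp (-((y+a)/θ)) = Real.exp (-(y/θ)) := by
      rw [← Real.exp_add]; ring_nf
    simp only
    rw [mul_div_assoc'] at *
    rw [this, add_comm a y]
  rw [h1, my_integral_comp_add_right_Ioi (fun t => Real.exp (a/θ) * (Real.exp (-(t/θ)) / t)) 0 a,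
    zero_add, integral_const_mul]
  congr 1
  have hb : (0:ℝ) < θ⁻¹ := inv_pos.mpr hθ
  have key := integral_comp_mul_left_Ioi (fun t => Real.exp (-t) / t) a hb
  simp only [smul_eq_mul] at key
  have h2 : ∀ x ∈ Set.Ioi a, Real.exp (-(θ⁻¹ * x)) / (θ⁻¹ * x) = θ * (Real.exp (-(x/θ)) / x) := by
    intro x hx
    have hx0 : x ≠ 0 := (lt_trans ha hx).ne'
    rw [div_eq_inv_mul x θ] at *
    field_simp
  rw [setIntegral_congr_fun measurableSet_Ioi h2] at key
  rw [integral_const_mul] at key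
  rw [inv_inv] at key
  rw [expIntegralE1]
  have haθ : θ⁻¹ * a = a / θ := (div_eq_inv_mul a θ).symm
  rw [haθ] at key
  exact mul_left_cancel₀ hθ.ne' key

/-- Closed form of Lemma 2: if `Y` is exponential with mean `θ > 0` and `c ≥ 0`, then
`E[log(1 + c/(1+Y))] = log(1+c) + e^{(1+c)/θ}E₁((1+c)/θ) − e^{1/θ}E₁(1/θ)`. -/
theorem integral_log_one_add_div_one_add_exponential (θ c : ℝ) (hθ : 0 < θ) (hc : 0 ≤ c) :
    ∫ y in Set.Ioi (0 : ℝ), Real.log (1 + c / (1 + y)) * ((1 / θ) * Real.exp (-(y / θ))) =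
      Real.log (1 + c) + Real.exp ((1 + c) / θ) * expIntegralE1 ((1 + c) / θ) -
        Real.exp (1 / θ) * expIntegralE1 (1 / θ) := by
  -- basic positivity facts
  have hc1 : (0:ℝ) < 1 + c := by linarith
  -- integrability of exp(-(y/θ)) on Ioi 0
  have intExp : IntegrableOn (fun y : ℝ => Real.exp (-(y/θ))) (Set.Ioi 0) := by
    have := exp_neg_integrableOn_Ioi 0 (inv_pos.mpr hθ)
    simpa [div_eq_inv_mul] using this
  -- integrability of exp(-(y/θ))/(a+y) for 1 ≤ a
  have intG : ∀ a : ℝ, 1 ≤ a →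
      IntegrableOn (fun y : ℝ => Real.exp (-(y/θ)) / (a + y)) (Set.Ioi 0) := by
    intro a ha
    refine Integrable.mono' intExp ?_ ?_
    · refine (ContinuousOn.div ?_ ?_ ?_).aestronglyMeasurable measurableSet_Ioi
      · exact Continuous.continuousOn (by continuity)
      · exact Continuous.continuousOn (by continuity)
      · intro x hx; have : (0:ℝ) < x := hx; positivity
    · filter_upwards [ae_restrict_mem measurableSet_Ioi] with y hy
      have hy0 : (0:ℝ) < y := hy
      have h1 : (1:ℝ) ≤ a + y := by linarith
      rw [norm_div, Real.norm_eq_abs, Real.norm_eq_abs, abs_of_nonneg (Real.exp_nonneg _),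
        abs_of_nonneg (by linarith : (0:ℝ) ≤ a + y)]
      exact div_le_self (Real.exp_nonneg _) h1
  have intG2 := intG (1 + c) (by linarith)
  have intG1 := intG 1 le_rfl
  -- log identity on Ici 0
  have hlog : ∀ y : ℝ, 0 ≤ y →
      Real.log (1 + c / (1 + y)) = Real.log (1 + c + y) - Real.log (1 + y) := by
    intro y hy
    have h1y : (0:ℝ) < 1 + y := by linarith
    have h2y : (0:ℝ) < 1 + c + y := by linarith
    have : 1 + c / (1 + y) = (1 + c + y) / (1 + y) := by field_simp; ring
    rw [this, Real.log_div h2y.ne' h1y.ne']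
  -- bound on the log
  have hlogle : ∀ y : ℝ, 0 ≤ y →
      Real.log (1 + c + y) - Real.log (1 + y) ≤ Real.log (1 + c) := by
    intro y hy
    have h1y : (0:ℝ) < 1 + y := by linarith
    have h2y : (0:ℝ) < 1 + c + y := by linarith
    have hle : 1 + c + y ≤ (1 + c) * (1 + y) := by nlinarith
    have := Real.log_le_log h2y hle
    rw [Real.log_mul hc1.ne' h1y.ne'] at this
    linarith
  have hlognn : ∀ y : ℝ, 0 ≤ y →
      0 ≤ Real.log (1 + c + y) - Real.log (1 + y) := by
    intro y hy
    have h1y : (0:ℝ) < 1 + y := by linarith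
    have := Real.log_le_log h1y (by linarith : 1 + y ≤ 1 + c + y)
    linarith
  -- the integrand
  set L : ℝ → ℝ := fun y => Real.log (1 + c / (1 + y)) * ((1 / θ) * Real.exp (-(y / θ))) with hL
  have intL : IntegrableOn L (Set.Ioi 0) := by
    refine Integrable.mono' ((intExp.const_mul (Real.log (1 + c) * (1/θ)))) ?_ ?_
    · refine ((ContinuousOn.log ?_ ?_).mul (Continuous.continuousOn (by continuity))).aestronglyMeasurable
        measurableSet_Ioi
      · refine ContinuousOn.add continuousOn_const (ContinuousOn.div continuousOn_const
          (Continuous.continuousOn (by continuity)) ?_)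
        intro x hx; have : (0:ℝ) < x := hx; positivity
      · intro x hx
        have hx0 : (0:ℝ) < x := hx
        have : 0 ≤ c / (1 + x) := by positivity
        positivity
    · filter_upwards [ae_restrict_mem measurableSet_Ioi] with y hy
      have hy0 : (0:ℝ) < y := hy
      have hln := hlog y hy0.le
      have h1 := hlogle y hy0.le
      have h2 := hlognn y hy0.le
      rw [hL]
      simp only [Real.norm_eq_abs]
      rw [abs_mul, abs_of_nonneg (by rw [hln]; exact h2),
        abs_of_nonneg (by positivity : (0:ℝ) ≤ (1/θ) * Real.exp (-(y/θ))), hln, mul_assoc]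
      have : (0:ℝ) ≤ (1/θ) * Real.exp (-(y/θ)) := by positivity
      nlinarith [Real.exp_nonneg (-(y/θ))]
  -- the antiderivative and its derivative
  set h : ℝ → ℝ := fun y => (Real.log (1 + c + y) - Real.log (1 + y)) * (-Real.exp (-(y/θ)))
    with hh
  set H' : ℝ → ℝ := fun y => (1/(1+c+y) - 1/(1+y)) * (-Real.exp (-(y/θ)))
    + (Real.log (1 + c + y) - Real.log (1 + y)) * ((1/θ) * Real.exp (-(y/θ))) with hH
  have hderiv : ∀ x ∈ Set.Ici (0:ℝ), HasDerivAt h (H' x) x := by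
    intro x hx
    have hx0 : (0:ℝ) ≤ x := hx
    have h1x : (0:ℝ) < 1 + x := by linarith
    have h2x : (0:ℝ) < 1 + c + x := by linarith
    have d1 : HasDerivAt (fun y : ℝ => Real.log (1 + c + y)) (1/(1+c+x)) x := by
      have : HasDerivAt (fun y : ℝ => 1 + c + y) 1 x := (hasDerivAt_id x).const_add (1 + c)
      simpa using this.log h2x.ne'
    have d2 : HasDerivAt (fun y : ℝ => Real.log (1 + y)) (1/(1+x)) x := by
      have : HasDerivAt (fun y : ℝ => 1 + y) 1 x := (hasDerivAt_id x).const_add 1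
      simpa using this.log h1x.ne'
    have d3 : HasDerivAt (fun y : ℝ => -Real.exp (-(y/θ))) ((1/θ) * Real.exp (-(x/θ))) x := by
      have e1 : HasDerivAt (fun y : ℝ => -(y/θ)) (-(1/θ)) x := by
        exact ((hasDerivAt_id x).div_const θ).neg
      have e2 := e1.exp
      have : HasDerivAt (fun y : ℝ => -Real.exp (-(y/θ))) (-(Real.exp (-(x/θ)) * -(1/θ))) x := e2.neg
      convert this using 1
      ring
    have : HasDerivAt (fun y => (Real.log (1 + c + y) - Real.log (1 + y)) * (-Real.exp (-(y/θ)))) ((1/(1+c+x) - 1/(1+x)) * (-Real.exp (-(x/θ))) + (Real.log (1 + c + x) - Real.log (1 + x)) * ((1/θ) * Real.exp (-(x/θ)))) x := (d1.sub d2).mul d3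
    convert this using 1
  -- integrability of H'
  have intH' : IntegrableOn H' (Set.Ioi 0) := by
    have heq : Set.EqOn (fun y => Real.exp (-(y/θ)) / (1 + y) - Real.exp (-(y/θ)) / (1 + c + y)
        + L y) H' (Set.Ioi 0) := by
      intro y hy
      have hy0 : (0:ℝ) < y := hy
      simp only [hL, hH]
      rw [hlog y hy0.le]
      ring
    exact MeasureTheory.IntegrableOn.congr_fun ((intG1.sub intG2).add intL) heq measurableSet_Ioi
  -- limit of h at infinity
  have htop : Tendsto h atTop (𝓝 0) := by
    have hexp : Tendsto (fun y : ℝ => Real.exp (-(y/θ))) atTop (𝓝 0) := by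
      have h1 : Tendsto (fun y : ℝ => y / θ) atTop atTop :=
        tendsto_id.atTop_div_const hθ
      exact Real.tendsto_exp_neg_atTop_nhds_zero.comp h1
    have hlow : Tendsto (fun y : ℝ => -(Real.log (1 + c) * Real.exp (-(y/θ)))) atTop (𝓝 0) := by
      have := (hexp.const_mul (Real.log (1 + c))).neg
      simpa using this
    refine tendsto_of_tendsto_of_tendsto_of_le_of_le' hlow tendsto_const_nhds ?_ ?_
    · filter_upwards [eventually_ge_atTop (0:ℝ)] with y hy
      have h1 := hlogle y hy
      have h2 := Real.exp_nonneg (-(y/θ))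
      simp only [hh]
      nlinarith [hlognn y hy]
    · filter_upwards [eventually_ge_atTop (0:ℝ)] with y hy
      have h2 := Real.exp_nonneg (-(y/θ))
      simp only [hh]
      nlinarith [hlognn y hy]
  -- FTC on Ioi 0
  have hcont : ContinuousWithinAt h (Set.Ici 0) 0 := (hderiv 0 (by norm_num)).continuousAt.continuousWithinAt
  have hFTC := integral_Ioi_of_hasDerivAt_of_tendsto' hderiv intH' htop
  have hh0 : h 0 = -Real.log (1 + c) := by
    simp [hh]
  -- main computation
  have hmain : ∫ y in Set.Ioi (0:ℝ), L y
      = (∫ y in Set.Ioi (0:ℝ), H' y)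
        + ((∫ y in Set.Ioi (0:ℝ), Real.exp (-(y/θ)) / (1 + c + y))
          - ∫ y in Set.Ioi (0:ℝ), Real.exp (-(y/θ)) / (1 + y)) := by
    have hadd := integral_add intH' (intG2.sub intG1)
    have hsub := integral_sub intG2 intG1
    simp only [Pi.add_apply, Pi.sub_apply] at hadd hsub
    rw [← hsub, ← hadd]
    refine setIntegral_congr_fun measurableSet_Ioi fun y hy => ?_
    have hy0 : (0:ℝ) < y := hy
    simp only [hL, hH]
    rw [hlog y hy0.le]
    ring
  have e2 : ∫ y in Set.Ioi (0:ℝ), Real.exp (-(y/θ)) / (1 + c + y)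
      = Real.exp ((1+c)/θ) * expIntegralE1 ((1+c)/θ) := by
    have := subA θ (1 + c) hθ hc1
    simpa [add_assoc] using this
  have e1 : ∫ y in Set.Ioi (0:ℝ), Real.exp (-(y/θ)) / (1 + y)
      = Real.exp (1/θ) * expIntegralE1 (1/θ) := subA θ 1 hθ one_pos
  calc ∫ y in Set.Ioi (0:ℝ), Real.log (1 + c / (1 + y)) * ((1 / θ) * Real.exp (-(y / θ)))
      = ∫ y in Set.Ioi (0:ℝ), L y := rfl
    _ = (∫ y in Set.Ioi (0:ℝ), H' y)
        + ((∫ y in Set.Ioi (0:ℝ), Real.exp (-(y/θ)) / (1 + c + y))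
          - ∫ y in Set.Ioi (0:ℝ), Real.exp (-(y/θ)) / (1 + y)) := hmain
    _ = (0 - h 0) + (Real.exp ((1+c)/θ) * expIntegralE1 ((1+c)/θ)
          - Real.exp (1/θ) * expIntegralE1 (1/θ)) := by rw [hFTC, e2, e1]
    _ = Real.log (1 + c) + Real.exp ((1 + c) / θ) * expIntegralE1 ((1 + c) / θ) -
        Real.exp (1 / θ) * expIntegralE1 (1 / θ) := by rw [hh0]; ring
end

section
/- The function x ↦ log x + eˣ·E₁(x) is concave on the interval (0, ∞). -/
open Set MeasureTheory Real intervalIntegral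

lemma e1_integrableOn {x : ℝ} (hx : 0 < x) :
    IntegrableOn (fun t => Real.exp (-t) / t) (Set.Ioi x) := by
  have h := (exp_neg_integrableOn_Ioi x (b := 1) one_pos).const_mul (1/x)
  refine Integrable.mono' h ?_ ?_
  · exact ((Real.continuous_exp.comp continuous_neg).continuousOn.div
      continuousOn_id (fun t ht => (hx.trans ht).ne')).aestronglyMeasurable measurableSet_Ioi
  · filter_upwards [ae_restrict_mem measurableSet_Ioi] with t ht
    have htpos : 0 < t := hx.trans ht
    rw [Real.norm_eq_abs, abs_div, abs_of_pos (Real.exp_pos _), abs_of_pos htpos]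
    have : Real.exp (-t) / t ≤ Real.exp (-t) / x :=
      div_le_div_of_nonneg_left (Real.exp_pos _).le hx ht.le
    simpa [neg_one_mul, one_div, div_eq_inv_mul] using this

lemma e1_le {x : ℝ} (hx : 0 < x) : expIntegralE1 x ≤ Real.exp (-x) / x := by
  have h : expIntegralE1 x ≤ ∫ t in Set.Ioi x, Real.exp (-t) / x := by
    refine setIntegral_mono_on (e1_integrableOn hx) ?_ measurableSet_Ioi ?_
    · exact Integrable.congr ((exp_neg_integrableOn_Ioi x (b := 1) one_pos).const_mul x⁻¹)
        (Filter.Eventually.of_forall fun t => by simp [neg_one_mul, div_eq_inv_mul])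
    · intro t ht
      exact div_le_div_of_nonneg_left (Real.exp_pos _).le hx (le_of_lt ht)
  refine h.trans ?_
  have : (∫ t in Set.Ioi x, Real.exp (-t) / x) = (∫ t in Set.Ioi x, Real.exp (-t)) / x := by
    simp [div_eq_mul_inv, MeasureTheory.integral_mul_const]
  rw [this, integral_exp_neg_Ioi]

lemma e1_eq {x : ℝ} (hx : 0 < x) :
    expIntegralE1 x = expIntegralE1 1 - ∫ t in (1:ℝ)..x, Real.exp (-t) / t := by
  have key : ∀ a b : ℝ, 0 < a → a ≤ b →
      expIntegralE1 a = expIntegralE1 b + ∫ t in Set.Ioc a b, Real.exp (-t) / t := by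
    intro a b ha hab
    have hb : 0 < b := ha.trans_le hab
    have hsplit : (∫ t in Set.Ioc a b ∪ Set.Ioi b, Real.exp (-t) / t)
        = (∫ t in Set.Ioc a b, Real.exp (-t) / t) + ∫ t in Set.Ioi b, Real.exp (-t) / t := by
      refine setIntegral_union ?_ measurableSet_Ioi
        ((e1_integrableOn ha).mono_set Set.Ioc_subset_Ioi_self) (e1_integrableOn hb)
      exact Set.Ioc_disjoint_Ioi le_rfl
    rw [Set.Ioc_union_Ioi_eq_Ioi hab] at hsplit
    unfold expIntegralE1
    rw [hsplit]; ring
  rcases le_total 1 x with h | h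
  · rw [intervalIntegral.integral_of_le h, key 1 x one_pos h]; ring
  · rw [intervalIntegral.integral_of_ge h, key x 1 hx h]; ring

lemma e1_hasDerivAt {x : ℝ} (hx : 0 < x) :
    HasDerivAt expIntegralE1 (-(Real.exp (-x) / x)) x := by
  have hcont : ContinuousOn (fun t => Real.exp (-t) / t) (Set.Ioi 0) :=
    (Real.continuous_exp.comp continuous_neg).continuousOn.div
      continuousOn_id (fun t ht => ht.ne')
  have hii : IntervalIntegrable (fun t => Real.exp (-t) / t) volume 1 x := by
    rw [intervalIntegrable_iff]
    exact (e1_integrableOn (lt_min one_pos hx)).mono_set Set.Ioc_subset_Ioi_self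
  have hFTC : HasDerivAt (fun u => ∫ t in (1:ℝ)..u, Real.exp (-t) / t)
      (Real.exp (-x) / x) x := by
    exact intervalIntegral.integral_hasDerivAt_right hii
      (hcont.stronglyMeasurableAtFilter isOpen_Ioi x hx)
      (hcont.continuousAt (Ioi_mem_nhds hx))
  have h2 : HasDerivAt (fun u => expIntegralE1 1 - ∫ t in (1:ℝ)..u, Real.exp (-t) / t)
      (-(Real.exp (-x) / x)) x := by
    exact ((hasDerivAt_const x (expIntegralE1 1)).sub hFTC).congr_deriv (by ring)
  refine h2.congr_of_eventuallyEq ?_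
  filter_upwards [Ioi_mem_nhds hx] with u hu
  exact e1_eq hu

lemma f_hasDerivAt {x : ℝ} (hx : 0 < x) :
    HasDerivAt (fun x : ℝ => Real.log x + Real.exp x * expIntegralE1 x)
      (Real.exp x * expIntegralE1 x) x := by
  have h1 : HasDerivAt (fun x : ℝ => Real.exp x * expIntegralE1 x)
      (Real.exp x * expIntegralE1 x - 1 / x) x := by
    have := (Real.hasDerivAt_exp x).mul (e1_hasDerivAt hx)
    refine this.congr_deriv ?_
    rw [Real.exp_neg, mul_neg, ← sub_eq_add_neg, ← mul_div_assoc,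
      mul_inv_cancel₀ (Real.exp_pos x).ne']
  have := (Real.hasDerivAt_log hx.ne').add h1
  refine this.congr_deriv ?_
  ring

/-- The rate function `x ↦ log x + eˣ E₁(x)` is concave on `(0, ∞)`. -/
theorem concaveOn_log_add_exp_mul_expIntegralE1 :
    ConcaveOn ℝ (Set.Ioi (0 : ℝ))
      (fun x : ℝ => Real.log x + Real.exp x * expIntegralE1 x) := by
  refine concaveOn_of_hasDerivWithinAt2_nonpos (f' := fun x => Real.exp x * expIntegralE1 x)
    (f'' := fun x => Real.exp x * expIntegralE1 x - 1 / x)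
    (convex_Ioi 0) ?_ ?_ ?_ ?_
  · exact fun x hx => (f_hasDerivAt hx).continuousAt.continuousWithinAt
  · rw [interior_Ioi]
    exact fun x hx => (f_hasDerivAt hx).hasDerivWithinAt
  · rw [interior_Ioi]
    intro x hx
    have h1 : HasDerivAt (fun x : ℝ => Real.exp x * expIntegralE1 x)
        (Real.exp x * expIntegralE1 x - 1 / x) x := by
      have := (Real.hasDerivAt_exp x).mul (e1_hasDerivAt hx)
      refine this.congr_deriv ?_
      rw [Real.exp_neg, mul_neg, ← sub_eq_add_neg, ← mul_div_assoc,
        mul_inv_cancel₀ (Real.exp_pos x).ne']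
    exact h1.hasDerivWithinAt
  · rw [interior_Ioi]
    intro x hx
    have := mul_le_mul_of_nonneg_left (e1_le hx) (Real.exp_pos x).le
    rw [Real.exp_neg] at this
    have h : Real.exp x * (Real.exp x)⁻¹ / x = 1 / x := by
      rw [mul_inv_cancel₀ (Real.exp_pos x).ne']
    have h2 : Real.exp x * ((Real.exp x)⁻¹ / x) = 1 / x := by
      rw [← mul_div_assoc, h]
    linarith [this, h2.le]
end

section
/- Let T > 0, f_s > 0, N > 0, δ > N, ξ ≥ 0, let p₀, p₁, p_d ∈ [0, 1], and let C₀₀, C₀₁, D₁₀, D₁₁ be real constants with D₁₀ ≤ C₀₀. Define g(τ) = √(τ·f_s)·(δ/N − 1) + (δ/N)·ξ and C̃(τ) = ((T − τ)/T)·[p₀·(1 − Q(g(τ)))·C₀₀ + p₁·(1 − p_d)·C₀₁ + p₀·Q(g(τ))·D₁₀ + p₁·p_d·D₁₁], where Q(x) = ∫ₓ^∞ (2π)^{−1/2} e^{−u²/2} du is the standard Gaussian tail function. Then C̃ is concave on the interval (0, T]. -/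
open MeasureTheory Real

/-- The standard Gaussian tail function `Q(x) = ∫ₓ^∞ (2π)^{−1/2} e^{−u²/2} du`. -/
noncomputable def gaussQ (x : ℝ) : ℝ :=
  ∫ u in Set.Ioi x, (Real.sqrt (2 * Real.pi))⁻¹ * Real.exp (-u ^ 2 / 2)

/-- The standard Gaussian density. -/
noncomputable def gaussPhi (u : ℝ) : ℝ :=
  (Real.sqrt (2 * Real.pi))⁻¹ * Real.exp (-u ^ 2 / 2)

lemma gaussPhi_pos (u : ℝ) : 0 < gaussPhi u := by
  have h2π : 0 < 2 * Real.pi := by positivity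
  exact mul_pos (inv_pos.2 (Real.sqrt_pos.2 h2π)) (Real.exp_pos _)

lemma gaussPhi_continuous : Continuous gaussPhi := by
  unfold gaussPhi; fun_prop

lemma gaussPhi_integrable : Integrable gaussPhi := by
  have h : Integrable (fun u : ℝ => Real.exp (-(1/2 : ℝ) * u ^ 2)) :=
    integrable_exp_neg_mul_sq (by norm_num)
  have := h.const_mul (Real.sqrt (2 * Real.pi))⁻¹
  refine this.congr ?_
  filter_upwards with u
  unfold gaussPhi
  ring_nf

lemma gauss_aux_deriv_eq (τ fs c : ℝ) (hτ : 0 < τ) (hfs : 0 < fs) :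
    -(fs ^ 2 * c) / (4 * (τ * fs * Real.sqrt (τ * fs)))
      = fs * c / 2 * (-(fs / (2 * Real.sqrt (τ * fs))) / Real.sqrt (τ * fs) ^ 2) := by
  have hpos : 0 < Real.sqrt (τ * fs) := Real.sqrt_pos.2 (mul_pos hτ hfs)
  have hsq : Real.sqrt (τ * fs) ^ 2 = τ * fs := Real.sq_sqrt (mul_pos hτ hfs).le
  rw [hsq]
  generalize hs : Real.sqrt (τ * fs) = s at hpos ⊢
  field_simp
  ring

lemma hasDerivAt_gaussQ (x : ℝ) : HasDerivAt gaussQ (-gaussPhi x) x := by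
  have key : ∀ y : ℝ, gaussQ y = gaussQ 0 - ∫ u in (0:ℝ)..y, gaussPhi u := by
    intro y
    have h1 : (∫ u in Set.Iic y, gaussPhi u) - ∫ u in Set.Iic (0:ℝ), gaussPhi u
        = ∫ u in (0:ℝ)..y, gaussPhi u :=
      intervalIntegral.integral_Iic_sub_Iic gaussPhi_integrable.integrableOn
        gaussPhi_integrable.integrableOn
    have h2 : (∫ u in Set.Iic y, gaussPhi u) + ∫ u in Set.Ioi y, gaussPhi u
        = ∫ u, gaussPhi u :=
      intervalIntegral.integral_Iic_add_Ioi gaussPhi_integrable.integrableOn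
        gaussPhi_integrable.integrableOn
    have h3 : (∫ u in Set.Iic (0:ℝ), gaussPhi u) + ∫ u in Set.Ioi (0:ℝ), gaussPhi u
        = ∫ u, gaussPhi u :=
      intervalIntegral.integral_Iic_add_Ioi gaussPhi_integrable.integrableOn
        gaussPhi_integrable.integrableOn
    have : gaussQ y = ∫ u in Set.Ioi y, gaussPhi u := rfl
    rw [this, show gaussQ 0 = ∫ u in Set.Ioi (0:ℝ), gaussPhi u from rfl]
    linarith
  have hF : HasDerivAt (fun y : ℝ => ∫ u in (0:ℝ)..y, gaussPhi u) (gaussPhi x) x :=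
    intervalIntegral.integral_hasDerivAt_right
      gaussPhi_integrable.intervalIntegrable
      (gaussPhi_continuous.stronglyMeasurableAtFilter _ _)
      gaussPhi_continuous.continuousAt
  have : HasDerivAt (fun y : ℝ => gaussQ 0 - ∫ u in (0:ℝ)..y, gaussPhi u) (-gaussPhi x) x :=
    hF.const_sub _
  exact this.congr_of_eventuallyEq (Filter.Eventually.of_forall key)

lemma gaussQ_continuous : Continuous gaussQ :=
  continuous_iff_continuousAt.2 fun x => (hasDerivAt_gaussQ x).continuousAt

lemma hasDerivAt_gaussPhi (x : ℝ) : HasDerivAt gaussPhi (-x * gaussPhi x) x := by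
  have h1 : HasDerivAt (fun u : ℝ => -u ^ 2 / 2) (-x) x := by
    have := ((hasDerivAt_pow 2 x).neg.div_const 2)
    refine this.congr_deriv ?_
    ring
  have h2 := (h1.exp).const_mul (Real.sqrt (2 * Real.pi))⁻¹
  unfold gaussPhi
  refine h2.congr_deriv ?_
  ring

/-- Lemma 3: with `g(τ) = √(τ f_s)(δ/N − 1) + (δ/N)ξ`, the single-variable
spectrum-sensing objective
`C̃(τ) = ((T−τ)/T)[p₀(1−Q(g(τ)))C₀₀ + p₁(1−p_d)C₀₁ + p₀Q(g(τ))D₁₀ + p₁p_d D₁₁]`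
is concave on `(0, T]` whenever `T, f_s > 0`, `0 < N < δ`, `ξ ≥ 0`,
`p₀, p₁, p_d ∈ [0, 1]` and `D₁₀ ≤ C₀₀`. -/
theorem concaveOn_sensing_objective
    (T fs N δ ξ p₀ p₁ pd C₀₀ C₀₁ D₁₀ D₁₁ : ℝ)
    (hT : 0 < T) (hfs : 0 < fs) (hN : 0 < N) (hδ : N < δ) (hξ : 0 ≤ ξ)
    (hp₀ : p₀ ∈ Set.Icc (0 : ℝ) 1) (hp₁ : p₁ ∈ Set.Icc (0 : ℝ) 1)
    (hpd : pd ∈ Set.Icc (0 : ℝ) 1) (hD : D₁₀ ≤ C₀₀)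
    (g : ℝ → ℝ) (hg : ∀ τ, g τ = Real.sqrt (τ * fs) * (δ / N - 1) + (δ / N) * ξ)
    (Ctilde : ℝ → ℝ)
    (hC : ∀ τ, Ctilde τ = ((T - τ) / T) *
      (p₀ * (1 - gaussQ (g τ)) * C₀₀ + p₁ * (1 - pd) * C₀₁ +
        p₀ * gaussQ (g τ) * D₁₀ + p₁ * pd * D₁₁)) :
    ConcaveOn ℝ (Set.Ioc (0 : ℝ) T) Ctilde := by
  -- constants
  set c : ℝ := δ / N - 1 with hc_def
  have hc : 0 < c := by
    have : 1 < δ / N := (one_lt_div hN).2 hδ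
    simp [hc_def]; linarith
  set b : ℝ := (δ / N) * ξ with hb_def
  have hb : 0 ≤ b := by
    have : 0 < δ / N := div_pos (hN.trans hδ) hN
    exact mul_nonneg this.le hξ
  set A : ℝ := p₀ * C₀₀ + p₁ * (1 - pd) * C₀₁ + p₁ * pd * D₁₁ with hA_def
  set B : ℝ := p₀ * (C₀₀ - D₁₀) with hB_def
  have hB : 0 ≤ B := mul_nonneg hp₀.1 (by linarith)
  -- canonical form of Ctilde
  have hC' : ∀ τ, Ctilde τ = ((T - τ) / T) * (A - B * gaussQ (g τ)) := by
    intro τ; rw [hC]; simp only [hA_def, hB_def]; ring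
  -- derivative data for g
  set G1 : ℝ → ℝ := fun τ => fs * c / 2 * (Real.sqrt (τ * fs))⁻¹ with hG1_def
  set G2 : ℝ → ℝ := fun τ => -(fs ^ 2 * c) / (4 * ((τ * fs) * Real.sqrt (τ * fs))) with hG2_def
  have hsqrt : ∀ τ : ℝ, 0 < τ →
      HasDerivAt (fun t : ℝ => Real.sqrt (t * fs)) (fs / (2 * Real.sqrt (τ * fs))) τ := by
    intro τ hτ
    have hne : τ * fs ≠ 0 := (mul_pos hτ hfs).ne'
    have h1 : HasDerivAt (fun t : ℝ => t * fs) fs τ := by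
      simpa using (hasDerivAt_id τ).mul_const fs
    have := (Real.hasDerivAt_sqrt hne).comp τ h1
    refine this.congr_deriv ?_
    ring
  have hgd : ∀ τ : ℝ, 0 < τ → HasDerivAt g (G1 τ) τ := by
    intro τ hτ
    have h1 := ((hsqrt τ hτ).mul_const c).add_const b
    have hpos : 0 < Real.sqrt (τ * fs) := Real.sqrt_pos.2 (mul_pos hτ hfs)
    have heq : G1 τ = fs / (2 * Real.sqrt (τ * fs)) * c := by
      rw [hG1_def]; field_simp
    rw [heq]
    exact h1.congr_of_eventuallyEq (Filter.Eventually.of_forall fun t => by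
      rw [hg t])
  have hG1d : ∀ τ : ℝ, 0 < τ → HasDerivAt G1 (G2 τ) τ := by
    intro τ hτ
    have hpos : 0 < Real.sqrt (τ * fs) := Real.sqrt_pos.2 (mul_pos hτ hfs)
    have hinv := ((hsqrt τ hτ).inv hpos.ne').const_mul (fs * c / 2)
    have hsq : Real.sqrt (τ * fs) ^ 2 = τ * fs := Real.sq_sqrt (mul_pos hτ hfs).le
    have heq : G2 τ = fs * c / 2 * (-(fs / (2 * Real.sqrt (τ * fs))) / Real.sqrt (τ * fs) ^ 2) :=
      gauss_aux_deriv_eq τ fs c hτ hfs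
    rw [heq]
    exact hinv
  have hgpos : ∀ τ : ℝ, 0 < τ → 0 ≤ g τ := by
    intro τ hτ
    rw [hg τ]
    have h2 : 0 ≤ Real.sqrt (τ * fs) * c := mul_nonneg (Real.sqrt_nonneg _) hc.le
    linarith
  have hG1pos : ∀ τ : ℝ, 0 < τ → 0 < G1 τ := by
    intro τ hτ
    have hpos : 0 < Real.sqrt (τ * fs) := Real.sqrt_pos.2 (mul_pos hτ hfs)
    exact mul_pos (by positivity) (inv_pos.2 hpos)
  have hG2neg : ∀ τ : ℝ, 0 < τ → G2 τ < 0 := by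
    intro τ hτ
    have hpos : 0 < Real.sqrt (τ * fs) := Real.sqrt_pos.2 (mul_pos hτ hfs)
    have : 0 < fs ^ 2 * c := by positivity
    have h4 : 0 < 4 * ((τ * fs) * Real.sqrt (τ * fs)) := by positivity
    exact div_neg_of_neg_of_pos (by linarith) h4
  -- composed derivatives
  set Q1 : ℝ → ℝ := fun τ => -gaussPhi (g τ) * G1 τ with hQ1_def
  set Q2 : ℝ → ℝ := fun τ =>
    g τ * gaussPhi (g τ) * G1 τ ^ 2 - gaussPhi (g τ) * G2 τ with hQ2_def
  have hQ1d : ∀ τ : ℝ, 0 < τ → HasDerivAt (fun t => gaussQ (g t)) (Q1 τ) τ := by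
    intro τ hτ
    exact (hasDerivAt_gaussQ (g τ)).comp τ (hgd τ hτ)
  have hQ2d : ∀ τ : ℝ, 0 < τ → HasDerivAt Q1 (Q2 τ) τ := by
    intro τ hτ
    have hphi : HasDerivAt (fun t => gaussPhi (g t)) (-g τ * gaussPhi (g τ) * G1 τ) τ := by
      exact (hasDerivAt_gaussPhi (g τ)).comp τ (hgd τ hτ)
    have := hphi.neg.mul (hG1d τ hτ)
    refine this.congr_deriv ?_
    simp only [hQ2_def, Pi.neg_apply]
    ring
  -- derivatives of Ctilde
  set F1 : ℝ → ℝ := fun τ => (-1 / T) * (A - B * gaussQ (g τ)) + ((T - τ) / T) * (-B * Q1 τ)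
    with hF1_def
  set F2 : ℝ → ℝ := fun τ =>
    (-1 / T) * (-B * Q1 τ) + ((-1 / T) * (-B * Q1 τ) + ((T - τ) / T) * (-B * Q2 τ)) with hF2_def
  have hlin : ∀ τ : ℝ, HasDerivAt (fun t : ℝ => (T - t) / T) (-1 / T) τ := by
    intro τ
    have := ((hasDerivAt_id τ).const_sub T).div_const T
    simpa using this
  have hF1d : ∀ τ : ℝ, 0 < τ → HasDerivAt Ctilde (F1 τ) τ := by
    intro τ hτ
    have h2 : HasDerivAt (fun t : ℝ => A - B * gaussQ (g t)) (-B * Q1 τ) τ := by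
      have := ((hQ1d τ hτ).const_mul B).const_sub A
      refine this.congr_deriv ?_; ring
    have := (hlin τ).mul h2
    exact (this.congr_of_eventuallyEq (Filter.Eventually.of_forall fun t => (hC' t))).congr_deriv
      rfl
  have hF2d : ∀ τ : ℝ, 0 < τ → HasDerivAt F1 (F2 τ) τ := by
    intro τ hτ
    have h1 : HasDerivAt (fun t : ℝ => (-1 / T) * (A - B * gaussQ (g t)))
        ((-1 / T) * (-B * Q1 τ)) τ := by
      have := (((hQ1d τ hτ).const_mul B).const_sub A).const_mul (-1 / T)
      refine this.congr_deriv ?_; ring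
    have h2 : HasDerivAt (fun t : ℝ => ((T - t) / T) * (-B * Q1 t))
        ((-1 / T) * (-B * Q1 τ) + ((T - τ) / T) * (-B * Q2 τ)) τ :=
      (hlin τ).mul ((hQ2d τ hτ).const_mul (-B))
    exact h1.add h2
  -- continuity of Ctilde on the set
  have hcont : ContinuousOn Ctilde (Set.Ioc (0 : ℝ) T) := by
    have hgc : Continuous g := by
      have : Continuous fun τ : ℝ => Real.sqrt (τ * fs) * (δ / N - 1) + (δ / N) * ξ := by
        fun_prop
      exact this.congr fun t => (hg t).symm
    have : Continuous Ctilde := by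
      have hcc : Continuous fun τ : ℝ => ((T - τ) / T) * (A - B * gaussQ (g τ)) :=
        (by fun_prop : Continuous fun τ : ℝ => (T - τ) / T).mul
          (continuous_const.sub (continuous_const.mul (gaussQ_continuous.comp hgc)))
      exact hcc.congr fun t => (hC' t).symm
    exact this.continuousOn
  -- apply the criterion
  have hIoo : interior (Set.Ioc (0 : ℝ) T) = Set.Ioo 0 T := interior_Ioc
  refine concaveOn_of_hasDerivWithinAt2_nonpos (convex_Ioc _ _) hcont
    (f' := F1) (f'' := F2) ?_ ?_ ?_
  · intro x hx
    rw [hIoo] at hx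
    exact (hF1d x hx.1).hasDerivWithinAt
  · intro x hx
    rw [hIoo] at hx
    exact (hF2d x hx.1).hasDerivWithinAt
  · intro x hx
    rw [hIoo] at hx
    obtain ⟨hx0, hxT⟩ := hx
    have hq1 : Q1 x ≤ 0 := by
      have := gaussPhi_pos (g x)
      have := hG1pos x hx0
      simp only [hQ1_def]
      nlinarith
    have hq2 : 0 ≤ Q2 x := by
      have h1 := gaussPhi_pos (g x)
      have h2 := hG1pos x hx0
      have h3 := hG2neg x hx0
      have h4 := hgpos x hx0
      simp only [hQ2_def]
      nlinarith [mul_pos h1 (neg_pos.2 h3),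
        mul_nonneg (mul_nonneg h4 h1.le) (sq_nonneg (G1 x))]
    have hTτ : 0 ≤ (T - x) / T := div_nonneg (by linarith) hT.le
    have hinvT : 0 < 1 / T := by positivity
    simp only [hF2_def]
    have t1 : (-1 / T) * (-B * Q1 x) ≤ 0 := by
      have : 0 ≤ B * (-Q1 x) := mul_nonneg hB (by linarith)
      have h5 : (-1 / T) * (-B * Q1 x) = -(1 / T * (B * (-Q1 x))) := by ring
      rw [h5]
      exact neg_nonpos.2 (mul_nonneg hinvT.le this)
    have t2 : ((T - x) / T) * (-B * Q2 x) ≤ 0 := by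
      have hBQ : -B * Q2 x ≤ 0 := by
        rw [neg_mul]; exact neg_nonpos.2 (mul_nonneg hB hq2)
      exact mul_nonpos_of_nonneg_of_nonpos hTτ hBQ
    linarith
end
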